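/- There exists D > 0 such that the following holds: for every subinterval K of S¹ of length |K| < 1/4 and every C¹ map ψ : K → [0,1] with |ψ'(ω)| ≤ D for all ω ∈ K, whose graph is contained either in K × [0,1/2] or in K × (1/2,1], the image by T of the graph of ψ is the graph of a C¹ map ψ̃ : F(K) → [0,1] with |ψ̃'| ≤ D everywhere. -/

import Mathlib

open MeasureTheory Real Filter Topology
open scoped NNReal ENNReal

noncomputable section

/-- The circle `S¹ = ℝ/ℤ`. -/
abbrev S1 : Type := UnitAddCircle

/-- The map `F(ω) = 4ω` on the circle. -/
noncomputable def Fm : S1 → S1 := fun ω => (4 : ℕ) • ω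

/-- The one-dimensional maps `T_a(x) = x(1 + 2^a x^a) = x(1 + (2x)^a)` for `x ≤ 1/2`,
`2x - 1` for `x > 1/2`. -/
noncomputable def Ta (a x : ℝ) : ℝ := if x ≤ 1 / 2 then x * (1 + (2 * x) ^ a) else 2 * x - 1

/-- The skew product `T(ω, x) = (F ω, T_{α(ω)}(x))`. -/
noncomputable def Tskew (α : S1 → ℝ) : S1 × ℝ → S1 × ℝ :=
  fun p => (Fm p.1, Ta (α p.1) p.2)

/-- The reference measure: Haar probability on `S¹` times Lebesgue measure on `[0,1]`. -/
noncomputable def Leb : Measure (S1 × ℝ) :=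
  (volume : Measure S1).prod (volume.restrict (Set.Icc (0:ℝ) 1))

/-- `C¹` together with a derivative bound, from a continuous formula for the derivative. -/
private lemma aux_c1 {c d D : ℝ} (hcd : c < d) {f g : ℝ → ℝ}
    (hfg : ∀ s ∈ Set.Icc c d, HasDerivWithinAt f (g s) (Set.Icc c d) s)
    (hg : ContinuousOn g (Set.Icc c d))
    (hgD : ∀ s ∈ Set.Icc c d, |g s| ≤ D) :
    ContDiffOn ℝ 1 f (Set.Icc c d) ∧
      ∀ s ∈ Set.Icc c d, |derivWithin f (Set.Icc c d) s| ≤ D := by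
  have hu : UniqueDiffOn ℝ (Set.Icc c d) := uniqueDiffOn_Icc hcd
  have hder : ∀ s ∈ Set.Icc c d, derivWithin f (Set.Icc c d) s = g s :=
    fun s hs => (hfg s hs).derivWithin (hu s hs)
  refine ⟨?_, fun s hs => (hder s hs) ▸ hgD s hs⟩
  rw [show (1 : WithTop ℕ∞) = 0 + 1 from rfl, contDiffOn_succ_iff_derivWithin hu]
  refine ⟨fun s hs => (hfg s hs).differentiableWithinAt, by simp, ?_⟩
  rw [contDiffOn_zero]
  exact hg.congr hder

set_option maxHeartbeats 2000000 in
/-- Admissible curves: there is `D > 0` such that the image under `T` of the graph of a `C¹`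
map `ψ : K → [0,1]` with `|ψ'| ≤ D`, over an interval `K` of length `< 1/4`, contained in
`K × [0,1/2]` or in `K × (1/2,1]`, is again the graph of a `C¹` map with derivative bounded
by `D` over `F(K)`. -/
theorem stmt6
    (α : S1 → ℝ) (αl : ℝ → ℝ)
    (hαl : ContDiff ℝ 2 αl) (hlift : ∀ t : ℝ, α (t : S1) = αl t)
    (x₀ : S1) (t₀ : ℝ) (ht₀ : (t₀ : S1) = x₀)
    (αmin αmax : ℝ)
    (hmin : ∀ ω, αmin ≤ α ω) (hx₀ : α x₀ = αmin)
    (huniq : ∀ ω, α ω = αmin → ω = x₀)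
    (hmax : ∀ ω, α ω ≤ αmax) (hmax_att : ∃ ω, α ω = αmax)
    (h0 : 0 < αmin) (h01 : αmin < αmax) (h1 : αmax < 1) (h32 : αmax < 3 / 2 * αmin)
    (h2nd : 0 < iteratedDeriv 2 αl t₀)
 :
    ∃ D : ℝ, 0 < D ∧ ∀ a b : ℝ, a ≤ b → b - a < 1 / 4 →
      ∀ ψ : ℝ → ℝ, ContDiffOn ℝ 1 ψ (Set.Icc a b) →
        (∀ t ∈ Set.Icc a b, ψ t ∈ Set.Icc (0:ℝ) 1) →
        (∀ t ∈ Set.Icc a b, |derivWithin ψ (Set.Icc a b) t| ≤ D) →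
        ((∀ t ∈ Set.Icc a b, ψ t ≤ 1 / 2) ∨ (∀ t ∈ Set.Icc a b, 1 / 2 < ψ t)) →
        ∃ ψ' : ℝ → ℝ, ContDiffOn ℝ 1 ψ' (Set.Icc (4 * a) (4 * b)) ∧
          (∀ s ∈ Set.Icc (4 * a) (4 * b),
            ψ' s ∈ Set.Icc (0:ℝ) 1 ∧ |derivWithin ψ' (Set.Icc (4 * a) (4 * b)) s| ≤ D) ∧
          ∀ t ∈ Set.Icc a b, Ta (α (t : S1)) (ψ t) = ψ' (4 * t) := by
  classical
  -- bounds on the lift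
  have hlmin : ∀ u : ℝ, αmin ≤ αl u := fun u => (hlift u) ▸ hmin _
  have hlmax : ∀ u : ℝ, αl u ≤ αmax := fun u => (hlift u) ▸ hmax _
  -- periodicity and boundedness of the derivative of the lift
  have hper : Function.Periodic αl 1 := by
    intro t
    rw [← hlift, ← hlift, AddCircle.coe_add_period]
  have hdiffαl : Differentiable ℝ αl := hαl.differentiable (by norm_num)
  have hderper : Function.Periodic (deriv αl) 1 := by
    intro t
    have h1 : HasDerivAt αl (deriv αl (t + 1)) (t + 1) := (hdiffαl _).hasDerivAt
    have h2 : HasDerivAt (fun u : ℝ => αl (u + 1)) (deriv αl (t + 1)) t := by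
      simpa [Function.comp_def] using h1.comp t ((hasDerivAt_id t).add_const 1)
    have h3 : HasDerivAt αl (deriv αl (t + 1)) t := by
      have he : (fun u : ℝ => αl (u + 1)) = αl := funext fun u => hper u
      rwa [he] at h2
    exact h3.deriv.symm
  obtain ⟨M, hM0, hM⟩ : ∃ M : ℝ, 0 ≤ M ∧ ∀ t : ℝ, |deriv αl t| ≤ M := by
    have hc : Continuous (deriv αl) := hαl.continuous_deriv one_le_two
    obtain ⟨x, hx, hmaxx⟩ := isCompact_Icc.exists_isMaxOn (Set.nonempty_Icc.mpr zero_le_one)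
      (hc.abs.continuousOn : ContinuousOn (fun t => |deriv αl t|) (Set.Icc (0:ℝ) 1))
    refine ⟨|deriv αl x|, abs_nonneg _, fun t => ?_⟩
    have hf : deriv αl t = deriv αl (Int.fract t) := by
      rw [Int.fract, show (t - ⌊t⌋ : ℝ) = t - ⌊t⌋ * 1 by ring, hderper.sub_int_mul_eq]
    rw [hf]
    exact hmaxx ⟨Int.fract_nonneg t, (Int.fract_lt_one t).le⟩
  -- the constant D
  set D : ℝ := max 1 M with hDdef
  have hD1 : (1:ℝ) ≤ D := le_max_left _ _
  have hDM : M ≤ D := le_max_right _ _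
  have hD0 : (0:ℝ) < D := lt_of_lt_of_le one_pos hD1
  refine ⟨D, hD0, ?_⟩
  intro a b hab hlen ψ hψ hψmem hψd hcase
  rcases eq_or_lt_of_le hab with rfl | hab'
  · -- degenerate interval: a = b
    refine ⟨fun _ => Ta (α (a : S1)) (ψ a), contDiffOn_const, fun s hs => ?_, fun t ht => ?_⟩
    · constructor
      · -- the value is in [0,1]
        show Ta (α (a : S1)) (ψ a) ∈ Set.Icc (0:ℝ) 1
        have hx := hψmem a ⟨le_rfl, le_rfl⟩
        have ha1 : αmin ≤ α (a : S1) := hmin _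
        have ha2 : α (a : S1) ≤ αmax := hmax _
        unfold Ta
        split_ifs with h
        · have hA0 : 0 ≤ (2 * ψ a) ^ (α (a:S1)) := Real.rpow_nonneg (by linarith [hx.1]) _
          have hA1 : (2 * ψ a) ^ (α (a:S1)) ≤ 1 :=
            Real.rpow_le_one (by linarith [hx.1]) (by linarith) (by linarith)
          constructor
          · nlinarith [hx.1]
          · nlinarith [hx.1]
        · push_neg at h
          exact ⟨by linarith, by linarith [hx.2]⟩
      · have hiso : 𝓝[Set.Icc (4*a) (4*a) \ {s}] s = ⊥ := by
          rw [Set.Icc_self]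
          rcases eq_or_ne s (4*a) with rfl | hne
          · simp
          · by_contra hbot
            have hneB : (𝓝[({4*a} \ {s} : Set ℝ)] s).NeBot := ⟨hbot⟩
            have hmem := mem_closure_iff_nhdsWithin_neBot.mpr hneB
            have h2 : closure ({4*a} \ {s} : Set ℝ) ⊆ {4*a} :=
              closure_minimal (Set.diff_subset.trans (le_refl _)) isClosed_singleton
            have := h2 hmem
            simp at this
            exact hne this
        rw [derivWithin_zero_of_not_accPt (by rw [accPt_principal_iff_nhdsWithin, not_neBot]; exact hiso)]
        simpa using hD0.le
    · have hta : t = a := le_antisymm ht.2 ht.1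
      rw [hta]
  · -- nondegenerate interval: a < b
    set I : Set ℝ := Set.Icc a b with hIdef
    set J : Set ℝ := Set.Icc (4*a) (4*b) with hJdef
    have h4ab : 4*a < 4*b := by linarith
    have huI : UniqueDiffOn ℝ I := uniqueDiffOn_Icc hab'
    have hmaps : Set.MapsTo (fun s : ℝ => s/4) J I := by
      intro s hs
      exact ⟨by linarith [hs.1], by linarith [hs.2]⟩
    have hψdiff : DifferentiableOn ℝ ψ I := hψ.differentiableOn one_ne_zero
    have hψdc : ContinuousOn (derivWithin ψ I) I := hψ.continuousOn_derivWithin huI le_rfl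
    -- abbreviations
    set v : ℝ → ℝ := fun s => ψ (s/4) with hvdef
    set β : ℝ → ℝ := fun s => αl (s/4) with hβdef
    set vd : ℝ → ℝ := fun s => derivWithin ψ I (s/4) * (1/4) with hvddef
    set βd : ℝ → ℝ := fun s => deriv αl (s/4) * (1/4) with hβddef
    have hdiv4 : ∀ s : ℝ, HasDerivAt (fun u : ℝ => u/4) (1/4 : ℝ) s := by
      intro s
      simpa using (hasDerivAt_id s).div_const 4
    have hv : ∀ s ∈ J, HasDerivWithinAt v (vd s) J s := by
      intro s hs
      have := ((hψdiff _ (hmaps hs)).hasDerivWithinAt).comp s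
        ((hdiv4 s).hasDerivWithinAt) hmaps
      simpa [Function.comp_def, hvdef, hvddef] using this
    have hβ : ∀ s ∈ J, HasDerivWithinAt β (βd s) J s := by
      intro s hs
      have := ((hdiffαl (s/4)).hasDerivAt).comp s (hdiv4 s)
      exact this.hasDerivWithinAt
    -- pointwise facts
    have hv0 : ∀ s ∈ J, 0 ≤ v s := fun s hs => (hψmem _ (hmaps hs)).1
    have hv1 : ∀ s ∈ J, v s ≤ 1 := fun s hs => (hψmem _ (hmaps hs)).2
    have hvdD : ∀ s ∈ J, |vd s| ≤ D/4 := by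
      intro s hs
      have := hψd _ (hmaps hs)
      rw [hvddef]
      simp only [abs_mul]
      rw [abs_of_nonneg (by norm_num : (0:ℝ) ≤ 1/4)]
      linarith
    have hβdD : ∀ s : ℝ, |βd s| ≤ D/4 := by
      intro s
      rw [hβddef]
      simp only [abs_mul]
      rw [abs_of_nonneg (by norm_num : (0:ℝ) ≤ 1/4)]
      have := hM (s/4)
      linarith
    have hβmin : ∀ s : ℝ, αmin ≤ β s := fun s => hlmin _
    have hβmax : ∀ s : ℝ, β s ≤ αmax := fun s => hlmax _
    -- continuity of the ingredients
    have hc4 : Continuous (fun s : ℝ => s/4) := continuous_id.div_const 4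
    have cvd : ContinuousOn vd J :=
      ((hψdc.comp hc4.continuousOn hmaps).mul continuousOn_const)
    have cβd : ContinuousOn βd J :=
      ((((hαl.continuous_deriv one_le_two).comp hc4).continuousOn).mul continuousOn_const)
    have cβ : ContinuousOn β J := ((hαl.continuous).comp hc4).continuousOn
    have cv : ContinuousOn v J := hψ.continuousOn.comp hc4.continuousOn hmaps
    rcases hcase with hc1 | hc2
    · -- case ψ ≤ 1/2 on I
      have hvhalf : ∀ s ∈ J, v s ≤ 1/2 := fun s hs => hc1 _ (hmaps hs)
      -- Lipschitz bound for ψ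
      have hlip : ∀ x ∈ I, ∀ y ∈ I, |ψ y - ψ x| ≤ D * |y - x| := by
        intro x hx y hy
        have := Convex.norm_image_sub_le_of_norm_derivWithin_le hψdiff
          (fun u hu => by simpa using hψd u hu) (convex_Icc a b) hx hy
        simpa [Real.norm_eq_abs] using this
      refine ⟨fun s => v s * (1 + (2 * v s) ^ β s), ?_⟩
      set H : ℝ → ℝ := fun s => vd s + ((2*v s)^(β s) * ((1 + β s) * vd s) +
        (2*v s)^(β s) * ((2*v s) * Real.log (2*v s)) * βd s / 2) with hHdef
      have hA0 : ∀ s ∈ J, 0 ≤ (2*v s)^(β s) :=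
        fun s hs => Real.rpow_nonneg (by linarith [hv0 s hs]) _
      have hA1 : ∀ s ∈ J, (2*v s)^(β s) ≤ 1 := fun s hs =>
        Real.rpow_le_one (by linarith [hv0 s hs]) (by linarith [hvhalf s hs])
          (by linarith [hβmin s])
      -- Claim A : derivative formula
      have hHderiv : ∀ s ∈ J, HasDerivWithinAt
          (fun s => v s * (1 + (2 * v s) ^ β s)) (H s) J s := by
        intro s hs
        rcases eq_or_lt_of_le (hv0 s hs) with hz | hpos
        · -- v s = 0
          have hz' : v s = 0 := hz.symm
          have hHz : H s = vd s := by
            rw [hHdef]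
            simp only [hz', mul_zero, Real.log_zero, zero_mul, mul_zero]
            rw [Real.zero_rpow (by linarith [hβmin s] : β s ≠ 0)]
            ring
          rw [hHz]
          have h0deriv : HasDerivWithinAt (fun s' => v s' * (2*v s')^(β s')) 0 J s := by
            rw [hasDerivWithinAt_iff_tendsto_slope]
            have hbound : ∀ s' ∈ J \ {s}, ‖slope (fun s' => v s' * (2*v s')^(β s')) s s'‖ ≤
                (D/4) * ((D/2) * |s' - s|) ^ αmin := by
              intro s' hs'
              have hs'J : s' ∈ J := hs'.1
              have hne : s' ≠ s := hs'.2
              have hΔpos : 0 < |s' - s| := by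
                rw [abs_pos, sub_ne_zero]; exact hne
              have hvb : v s' ≤ (D/4) * |s' - s| := by
                have := hlip (s/4) (hmaps hs) (s'/4) (hmaps hs'J)
                rw [show ψ (s/4) = v s from rfl, show ψ (s'/4) = v s' from rfl, hz'] at this
                have h4 : |s'/4 - s/4| = |s' - s| / 4 := by
                  rw [show s'/4 - s/4 = (s' - s)/4 by ring, abs_div]
                  norm_num
                rw [sub_zero, abs_of_nonneg (hv0 s' hs'J)] at this
                rw [h4] at this
                linarith
              have hnum : v s' * (2*v s')^(β s') ≤
                  ((D/4) * |s' - s|) * ((D/2) * |s' - s|) ^ αmin := by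
                rcases eq_or_lt_of_le (hv0 s' hs'J) with hz2 | hpos2
                · rw [← hz2, mul_zero, Real.zero_rpow (by linarith [hβmin s'] : β s' ≠ 0),
                    mul_zero]
                  positivity
                · have hb1 : (2*v s')^(β s') ≤ (2*v s')^αmin :=
                    Real.rpow_le_rpow_of_exponent_ge (by linarith) (by linarith [hvhalf s' hs'J])
                      (hβmin s')
                  have hb2 : (2*v s')^αmin ≤ ((D/2) * |s' - s|) ^ αmin :=
                    Real.rpow_le_rpow (by linarith) (by linarith) h0.le
                  have := mul_le_mul hvb (hb1.trans hb2) (Real.rpow_nonneg (by linarith) _)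
                    (by positivity)
                  linarith
              rw [slope_def_field]
              have hzero : v s * (2*v s)^(β s) = 0 := by
                rw [hz']; simp
              rw [hzero, sub_zero, Real.norm_eq_abs, abs_div]
              rw [div_le_iff₀ hΔpos]
              have hnn : 0 ≤ v s' * (2*v s')^(β s') :=
                mul_nonneg (hv0 s' hs'J) (hA0 s' hs'J)
              rw [abs_of_nonneg hnn]
              calc v s' * (2*v s')^(β s') ≤ ((D/4) * |s' - s|) * ((D/2) * |s' - s|) ^ αmin :=
                    hnum
                _ = (D/4) * ((D/2) * |s' - s|) ^ αmin * |s' - s| := by ring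
            have hlim : Filter.Tendsto (fun s' => (D/4) * ((D/2) * |s' - s|) ^ αmin)
                (nhdsWithin s (J \ {s})) (nhds 0) := by
              have t1 : Filter.Tendsto (fun s' : ℝ => (D/2) * |s' - s|)
                  (nhdsWithin s (J \ {s})) (nhds 0) := by
                have hcont : Continuous (fun s' : ℝ => (D/2) * |s' - s|) := by
                  continuity
                have := hcont.tendsto s
                simp only [sub_self, abs_zero, mul_zero] at this
                exact this.mono_left nhdsWithin_le_nhds
              have t2 := (Real.continuousAt_rpow_const 0 αmin (Or.inr h0.le)).tendsto.comp t1
              rw [Real.zero_rpow h0.ne'] at t2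
              have := t2.const_mul (D/4)
              simpa using this
            exact squeeze_zero_norm' (Filter.eventually_of_mem self_mem_nhdsWithin hbound) hlim
          have := (hv s hs).fun_add h0deriv
          have heq : (fun s' => v s' + v s' * (2*v s')^(β s')) =
              (fun s' => v s' * (1 + (2 * v s') ^ β s')) := by
            funext s'; ring
          rw [heq] at this
          simpa using this
        · -- v s > 0
          have h2vpos : 0 < 2 * v s := by linarith
          have hrp : HasDerivWithinAt (fun s' => (2*v s')^(β s'))
              ((2 * vd s) * β s * (2*v s)^(β s - 1) + βd s * (2*v s)^(β s) *
                Real.log (2*v s)) J s :=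
            HasDerivWithinAt.rpow ((hv s hs).const_mul 2) (hβ s hs) h2vpos
          have hprod := (hv s hs).mul (hrp.const_add 1)
          have hsub1 : (2*v s)^(β s - 1) = (2*v s)^(β s) / (2*v s) := by
            rw [show β s - 1 = β s - (1:ℝ) from rfl, Real.rpow_sub h2vpos, Real.rpow_one]
          have heqd : vd s * (1 + (2*v s)^(β s)) + v s *
              ((2 * vd s) * β s * (2*v s)^(β s - 1) + βd s * (2*v s)^(β s) *
                Real.log (2*v s)) = H s := by
            rw [hsub1, hHdef]
            field_simp
            ring
          rw [heqd] at hprod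
          exact hprod
      -- Claim B : continuity of H
      have cA : ContinuousOn (fun s => (2*v s)^(β s)) J := by
        intro s hs
        have h1 : ContinuousWithinAt (fun s' => ((2*v s', β s') : ℝ × ℝ)) J s :=
          ((continuousOn_const.mul cv) s hs).prodMk (cβ s hs)
        have h2 : ContinuousAt (fun p : ℝ × ℝ => p.1 ^ p.2) (2*v s, β s) :=
          Real.continuousAt_rpow _ (Or.inr (lt_of_lt_of_le h0 (hβmin s)))
        have h3 := ContinuousAt.comp_continuousWithinAt (x := s)
          (f := fun s' : ℝ => ((2*v s', β s') : ℝ × ℝ))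
          (g := fun p : ℝ × ℝ => p.1 ^ p.2) h2 h1
        simpa [Function.comp_def] using h3
      have cB : ContinuousOn (fun s => (2*v s) * Real.log (2*v s)) J := by
        have := Real.continuous_mul_log.comp_continuousOn
          ((continuousOn_const.mul cv) : ContinuousOn (fun s => 2 * v s) J)
        simpa [Function.comp_def, Pi.mul_apply] using this
      have cH : ContinuousOn H J := by
        rw [hHdef]
        exact cvd.add ((cA.mul ((continuousOn_const.add cβ).mul cvd)).add
          (((cA.mul cB).mul cβd).div_const 2))
      -- Claim C : bound on H
      have hHbound : ∀ s ∈ J, |H s| ≤ D := by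
        intro s hs
        have e1 := hvdD s hs
        have e2 := hβdD s
        have e3 := hA0 s hs
        have e4 := hA1 s hs
        have e5 : |(2*v s) * Real.log (2*v s)| ≤ 1 := by
          rcases eq_or_lt_of_le (hv0 s hs) with hz | hpos
          · rw [← hz]; simp
          · rw [abs_mul, ← abs_mul, mul_comm]
            exact (Real.abs_log_mul_self_lt (2*v s) (by linarith)
              (by linarith [hvhalf s hs])).le
        have e6 : |1 + β s| ≤ 2 := by
          rw [abs_of_nonneg (by linarith [hβmin s])]
          linarith [hβmax s]
        have f1 : |(2*v s)^(β s) * ((1 + β s) * vd s)| ≤ D/2 := by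
          rw [abs_mul, abs_mul, abs_of_nonneg e3]
          have g1 : |1 + β s| * |vd s| ≤ 2 * (D/4) :=
            mul_le_mul e6 e1 (abs_nonneg _) (by norm_num)
          have g2 : (2*v s)^(β s) * (|1 + β s| * |vd s|) ≤ 1 * (2 * (D/4)) :=
            mul_le_mul e4 g1 (mul_nonneg (abs_nonneg _) (abs_nonneg _)) zero_le_one
          linarith
        have f2 : |(2*v s)^(β s) * ((2*v s) * Real.log (2*v s)) * βd s / 2| ≤ D/8 := by
          rw [abs_div, abs_mul, abs_mul, abs_of_nonneg e3]
          have g1 : (2*v s)^(β s) * |(2*v s) * Real.log (2*v s)| ≤ 1 * 1 :=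
            mul_le_mul e4 e5 (abs_nonneg _) zero_le_one
          have g2 : (2*v s)^(β s) * |(2*v s) * Real.log (2*v s)| * |βd s| ≤ 1 * 1 * (D/4) :=
            mul_le_mul (by linarith) e2 (abs_nonneg _) (by norm_num)
          rw [show |(2:ℝ)| = 2 by norm_num]
          linarith
        calc |H s| ≤ |vd s| + |(2*v s)^(β s) * ((1 + β s) * vd s) +
              (2*v s)^(β s) * ((2*v s) * Real.log (2*v s)) * βd s / 2| := by
              rw [hHdef]; exact abs_add_le _ _
          _ ≤ |vd s| + (|(2*v s)^(β s) * ((1 + β s) * vd s)| +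
              |(2*v s)^(β s) * ((2*v s) * Real.log (2*v s)) * βd s / 2|) := by
              linarith [abs_add_le ((2*v s)^(β s) * ((1 + β s) * vd s))
                ((2*v s)^(β s) * ((2*v s) * Real.log (2*v s)) * βd s / 2)]
          _ ≤ D/4 + (D/2 + D/8) := by linarith
          _ ≤ D := by linarith
      obtain ⟨hcd1, hcd2⟩ := aux_c1 h4ab hHderiv cH hHbound
      refine ⟨hcd1, fun s hs => ⟨?_, hcd2 s hs⟩, fun t ht => ?_⟩
      · show v s * (1 + (2 * v s) ^ β s) ∈ Set.Icc (0:ℝ) 1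
        constructor
        · exact mul_nonneg (hv0 s hs) (by linarith [hA0 s hs])
        · nlinarith [hv0 s hs, hA1 s hs, hvhalf s hs, hA0 s hs]
      · have h4t : (4:ℝ) * t / 4 = t := by ring
        have hTa : Ta (α (t : S1)) (ψ t) = ψ t * (1 + (2 * ψ t) ^ (αl t)) := by
          rw [Ta, if_pos (hc1 t ht), hlift]
        rw [hTa]
        show ψ t * (1 + (2 * ψ t) ^ (αl t)) = v (4*t) * (1 + (2 * v (4*t)) ^ β (4*t))
        rw [hvdef, hβdef]
        simp only [h4t]
    · -- case ψ > 1/2 on I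
      refine ⟨fun s => 2 * v s - 1, ?_⟩
      have hHderiv : ∀ s ∈ J, HasDerivWithinAt (fun s => 2 * v s - 1) (2 * vd s) J s :=
        fun s hs => ((hv s hs).const_mul 2).sub_const 1
      have cH : ContinuousOn (fun s => 2 * vd s) J := continuousOn_const.mul cvd
      have hHbound : ∀ s ∈ J, |2 * vd s| ≤ D := by
        intro s hs
        rw [abs_mul, abs_of_nonneg (by norm_num : (0:ℝ) ≤ 2)]
        linarith [hvdD s hs]
      obtain ⟨hcd1, hcd2⟩ := aux_c1 h4ab hHderiv cH hHbound
      refine ⟨hcd1, fun s hs => ⟨?_, hcd2 s hs⟩, fun t ht => ?_⟩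
      · show 2 * v s - 1 ∈ Set.Icc (0:ℝ) 1
        have h1 := hc2 _ (hmaps hs)
        have h2 := hv1 s hs
        exact ⟨by linarith [h1], by linarith⟩
      · have h4t : (4:ℝ) * t / 4 = t := by ring
        have hTa : Ta (α (t : S1)) (ψ t) = 2 * ψ t - 1 := by
          rw [Ta, if_neg (not_le.mpr (hc2 t ht))]
        rw [hTa]
        show 2 * ψ t - 1 = 2 * v (4*t) - 1
        rw [hvdef]
        simp only [h4t]
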